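/- Let G be a compact Hausdorff topological group containing a Boolean subgroup B (every element of B has order at most 2) that is not closed in G, and let P = Γ(B) ≤ Aut(G) be the group of inner automorphisms by elements of B. If the closure cl(B) of B in G satisfies cl(B) ∩ Z(G) = {e_G}, then the topological semidirect product G ⋊ P is not minimal. -/

import Mathlib

open scoped Topology

/-- The group of self-homeomorphisms of `X`, with composition as multiplication:
`(f * g) x = f (g x)`, identity `Homeomorph.refl` and inverse `Homeomorph.symm`. -/
instance homeoGroup (X : Type*) [TopologicalSpace X] : Group (X ≃ₜ X) where
  mul f g := g.trans f
  one := Homeomorph.refl X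
  inv := Homeomorph.symm
  mul_assoc f g h := rfl
  one_mul f := rfl
  mul_one f := rfl
  inv_mul_cancel f := by ext x; exact f.symm_apply_apply x

/-- The compact-open topology on the homeomorphism group `H(X)`, induced from the
compact-open topology on `C(X, X)`. -/
def coTop (X : Type*) [TopologicalSpace X] : TopologicalSpace (X ≃ₜ X) :=
  TopologicalSpace.induced (fun f : X ≃ₜ X => (f : C(X, X))) ContinuousMap.compactOpen

/-- The group `Aut(G)` of all topological group automorphisms of a topological group `G`
(group automorphisms that are homeomorphisms), as a subgroup of the homeomorphism
group of `G`. -/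
def topAut (G : Type*) [Group G] [TopologicalSpace G] : Subgroup (G ≃ₜ G) where
  carrier := {f : G ≃ₜ G | ∀ a b : G, f (a * b) = f a * f b}
  one_mem' := fun _ _ => rfl
  mul_mem' := by
    intro f g hf hg a b
    show f (g (a * b)) = f (g a) * f (g b)
    rw [hg, hf]
  inv_mem' := by
    intro f hf a b
    show f.symm (a * b) = f.symm a * f.symm b
    apply f.injective
    rw [hf]
    simp

/-- The compact-open topology on `Aut(G)`. -/
def autTop (G : Type*) [Group G] [TopologicalSpace G] : TopologicalSpace ↥(topAut G) :=
  TopologicalSpace.induced (Subtype.val : ↥(topAut G) → G ≃ₜ G) (coTop G)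

/-- The tautological action of a subgroup `P ≤ Aut(G)` on `G`, as a homomorphism
`P →* MulAut G`. -/
def actHom {G : Type*} [Group G] [TopologicalSpace G] (P : Subgroup ↥(topAut G)) :
    ↥P →* MulAut G where
  toFun p := MulEquiv.mk' p.1.1.toEquiv (fun a b => p.1.2 a b)
  map_one' := rfl
  map_mul' _ _ := rfl

/-- The topology on a subgroup `P ≤ Aut(G)`, inherited from the compact-open topology. -/
def subAutTop {G : Type*} [Group G] [TopologicalSpace G] (P : Subgroup ↥(topAut G)) :
    TopologicalSpace ↥P :=
  TopologicalSpace.induced (Subtype.val : ↥P → ↥(topAut G)) (autTop G)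

/-- The product topology on the topological semidirect product `G ⋊ P`, whose underlying
group is `SemidirectProduct G ↥P (actHom P)`, i.e. the multiplication is
`(g₁, p₁) * (g₂, p₂) = (g₁ * p₁ g₂, p₁ * p₂)`. -/
def sdpTop {G : Type*} [Group G] [TopologicalSpace G] (P : Subgroup ↥(topAut G)) :
    TopologicalSpace (G ⋊[actHom P] ↥P) :=
  TopologicalSpace.induced (fun x : G ⋊[actHom P] ↥P => (x.left, x.right))
    (@instTopologicalSpaceProd G ↥P _ (subAutTop P))

/-- A (Hausdorff) topological group `(G, τ)` is *minimal* if every Hausdorff group topology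
on `G` coarser than `τ` equals `τ`. -/
def IsMinimalTopGroup (G : Type*) [Group G] (τ : TopologicalSpace G) : Prop :=
  ∀ σ : TopologicalSpace G, τ ≤ σ → @IsTopologicalGroup G σ _ → @T2Space G σ → σ = τ

/-- The canonical homomorphism `Γ : G → Aut(G)` sending `g` to the inner automorphism
`γ_g : x ↦ g * x * g⁻¹`; its range is the subgroup `Inn(G)` of inner automorphisms. -/
def innerAutHom (G : Type*) [Group G] [TopologicalSpace G] [IsTopologicalGroup G] :
    G →* ↥(topAut G) where
  toFun g := ⟨(Homeomorph.mulLeft g).trans (Homeomorph.mulRight g⁻¹), by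
    intro a b
    show g * (a * b) * g⁻¹ = (g * a * g⁻¹) * (g * b * g⁻¹)
    group⟩
  map_one' := by
    apply Subtype.ext
    ext x
    show (1 : G) * x * (1 : G)⁻¹ = x
    group
  map_mul' g h := by
    apply Subtype.ext
    ext x
    show (g * h) * x * (g * h)⁻¹ = g * (h * x * h⁻¹) * g⁻¹
    group


section Statement11Aux

variable {G : Type*} [Group G] [TopologicalSpace G] [IsTopologicalGroup G]

theorem mem_topClosure_iff (B : Subgroup G) {a : G} :
    a ∈ B.topologicalClosure ↔ a ∈ closure (B : Set G) := by
  rw [← SetLike.mem_coe, Subgroup.topologicalClosure_coe]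

theorem innerAut_conj_eq {a b : G} (h : innerAutHom G a = innerAutHom G b) (x : G) :
    a * x * a⁻¹ = b * x * b⁻¹ :=
  congrArg (fun q : ↥(topAut G) => ((q : G ≃ₜ G) x)) h

/-- Injectivity of conjugation on the closure of `B`, given triviality of
`cl(B) ∩ Z(G)`. -/
theorem conj_inj_of_center (B : Subgroup G)
    (hZ : ∀ g ∈ closure (B : Set G), g ∈ Subgroup.center G → g = 1)
    {a b : G} (ha : a ∈ closure (B : Set G)) (hb : b ∈ closure (B : Set G))
    (h : ∀ x : G, a * x * a⁻¹ = b * x * b⁻¹) : a = b := by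
  have hmem : a⁻¹ * b ∈ B.topologicalClosure :=
    mul_mem (inv_mem ((mem_topClosure_iff B).mpr ha)) ((mem_topClosure_iff B).mpr hb)
  have hc : a⁻¹ * b ∈ Subgroup.center G := by
    rw [Subgroup.mem_center_iff]
    intro g
    calc g * (a⁻¹ * b) = a⁻¹ * (a * g * a⁻¹) * b := by group
    _ = a⁻¹ * (b * g * b⁻¹) * b := by rw [h g]
    _ = a⁻¹ * b * g := by group
  exact inv_mul_eq_one.mp (hZ _ ((mem_topClosure_iff B).mp hmem) hc)

noncomputable def betaFun (B : Subgroup G) (p : ↥(Subgroup.map (innerAutHom G) B)) : G :=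
  (Subgroup.mem_map.mp p.2).choose

theorem betaFun_mem (B : Subgroup G) (p : ↥(Subgroup.map (innerAutHom G) B)) :
    betaFun B p ∈ B :=
  (Subgroup.mem_map.mp p.2).choose_spec.1

theorem betaFun_spec (B : Subgroup G) (p : ↥(Subgroup.map (innerAutHom G) B)) :
    innerAutHom G (betaFun B p) = (p : ↥(topAut G)) :=
  (Subgroup.mem_map.mp p.2).choose_spec.2

theorem betaFun_eq (B : Subgroup G)
    (hZ : ∀ g ∈ closure (B : Set G), g ∈ Subgroup.center G → g = 1)
    {b : G} (hb : b ∈ B) (p : ↥(Subgroup.map (innerAutHom G) B))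
    (hpb : innerAutHom G b = (p : ↥(topAut G))) :
    betaFun B p = b :=
  conj_inj_of_center B hZ (subset_closure (betaFun_mem B p)) (subset_closure hb)
    (innerAut_conj_eq (by rw [betaFun_spec, hpb]))

theorem betaFun_one (B : Subgroup G)
    (hZ : ∀ g ∈ closure (B : Set G), g ∈ Subgroup.center G → g = 1) :
    betaFun B (1 : ↥(Subgroup.map (innerAutHom G) B)) = 1 :=
  betaFun_eq B hZ B.one_mem 1 (by rw [map_one]; rfl)

theorem betaFun_mul (B : Subgroup G)
    (hZ : ∀ g ∈ closure (B : Set G), g ∈ Subgroup.center G → g = 1)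
    (p q : ↥(Subgroup.map (innerAutHom G) B)) :
    betaFun B (p * q) = betaFun B p * betaFun B q :=
  conj_inj_of_center B hZ (subset_closure (betaFun_mem _ _))
    (subset_closure (mul_mem (betaFun_mem _ _) (betaFun_mem _ _)))
    (innerAut_conj_eq (by rw [map_mul, betaFun_spec, betaFun_spec, betaFun_spec]; rfl))

theorem actHom_apply_eq (B : Subgroup G) (p : ↥(Subgroup.map (innerAutHom G) B)) (g : G) :
    actHom (Subgroup.map (innerAutHom G) B) p g
      = betaFun B p * g * (betaFun B p)⁻¹ := by
  have h := betaFun_spec B p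
  show ((p : ↥(topAut G)) : G ≃ₜ G) g = _
  rw [← h]
  rfl

theorem bool_closure (B : Subgroup G) [T2Space G] (hBool : ∀ b ∈ B, b * b = 1) :
    ∀ g ∈ closure (B : Set G), g * g = 1 := fun g hg =>
  closure_minimal (fun y hy => hBool y hy)
    (isClosed_eq (continuous_id.mul continuous_id) continuous_const) hg

/-- The two-element subgroup `{1, x}` generated by an involution. -/
def pairSubgroup {H : Type*} [Group H] (x : H) (hx : x * x = 1) : Subgroup H where
  carrier := {1, x}
  one_mem' := Or.inl rfl
  mul_mem' := by
    rintro a b (rfl | rfl) (rfl | rfl) <;> simp [hx]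
  inv_mem' := by
    rintro a (rfl | rfl) <;> simp [inv_eq_of_mul_eq_one_right hx]

theorem mem_pairSubgroup {H : Type*} [Group H] {x : H} {hx : x * x = 1} {a : H} :
    a ∈ pairSubgroup x hx ↔ a = 1 ∨ a = x := by
  show a ∈ ({1, x} : Set H) ↔ _
  simp [Set.mem_insert_iff]

/-- The compact-open topology on a subgroup `P` of `Aut(G)` is induced by the map
to `C(G, G)`. -/
theorem subAutTop_eq_induced (P : Subgroup ↥(topAut G)) :
    subAutTop P = TopologicalSpace.induced
      (fun p : ↥P => (((p : ↥(topAut G)) : G ≃ₜ G) : C(G, G)))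
      ContinuousMap.compactOpen := by
  rw [subAutTop, autTop, coTop, induced_compose, induced_compose]
  rfl

/-- Key continuity: the choice function `β : P → B ⊆ G` inverting `Γ` is continuous
for the compact-open topology on `P = Γ(B)`. -/
theorem betaFun_continuous (B : Subgroup G) [CompactSpace G] [T2Space G]
    (hZ : ∀ g ∈ closure (B : Set G), g ∈ Subgroup.center G → g = 1) :
    @Continuous _ _ (subAutTop (Subgroup.map (innerAutHom G) B)) _ (betaFun B) := by
  letI : TopologicalSpace ↥(Subgroup.map (innerAutHom G) B) :=
    subAutTop (Subgroup.map (innerAutHom G) B)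
  haveI : CompactSpace ↥B.topologicalClosure :=
    isCompact_iff_compactSpace.mp B.isClosed_topologicalClosure.isCompact
  set K := B.topologicalClosure with hKdef
  set ΓK : C(↥K, C(G, G)) :=
    ContinuousMap.curry ⟨fun q : ↥K × G => (q.1 : G) * q.2 * (q.1 : G)⁻¹, by fun_prop⟩
    with hΓK
  have hΓKapp : ∀ (k : ↥K) (y : G), ΓK k y = (k : G) * y * (k : G)⁻¹ := fun k y => rfl
  have hinj : Function.Injective ΓK := by
    intro k1 k2 h
    apply Subtype.ext
    refine conj_inj_of_center B hZ ((mem_topClosure_iff B).mp k1.2)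
      ((mem_topClosure_iff B).mp k2.2) (fun y => ?_)
    have := ContinuousMap.congr_fun h y
    rwa [hΓKapp, hΓKapp] at this
  have hemb : Topology.IsEmbedding ΓK :=
    (ΓK.continuous.isClosedEmbedding hinj).toIsEmbedding
  have hbK : Continuous (fun p : ↥(Subgroup.map (innerAutHom G) B) =>
      (⟨betaFun B p, B.le_topologicalClosure (betaFun_mem B p)⟩ : ↥K)) := by
    rw [hemb.continuous_iff]
    have heq : (ΓK ∘ fun p : ↥(Subgroup.map (innerAutHom G) B) =>
        (⟨betaFun B p, B.le_topologicalClosure (betaFun_mem B p)⟩ : ↥K))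
        = fun p : ↥(Subgroup.map (innerAutHom G) B) =>
          (((p : ↥(topAut G)) : G ≃ₜ G) : C(G, G)) := by
      funext p
      ext y
      show betaFun B p * y * (betaFun B p)⁻¹ = ((p : ↥(topAut G)) : G ≃ₜ G) y
      rw [← betaFun_spec B p]
      rfl
    rw [heq]
    exact continuous_iff_le_induced.mpr
      (le_of_eq (subAutTop_eq_induced (Subgroup.map (innerAutHom G) B)))
  exact continuous_subtype_val.comp hbK

end Statement11Aux

/-- Let `G` be a compact Hausdorff topological group containing a
non-closed Boolean subgroup `B`, and let `P = Γ(B) ≤ Aut(G)` be the group of inner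
automorphisms by elements of `B`.  If `cl(B) ∩ Z(G)` is trivial, then the topological
semidirect product `G ⋊ P` is not minimal. -/
theorem semidirectProduct_not_minimal_of_boolean (G : Type*)
    [Group G] [TopologicalSpace G] [IsTopologicalGroup G] [CompactSpace G] [T2Space G]
    (B : Subgroup G) (hBool : ∀ b ∈ B, b * b = 1)
    (hBnotClosed : ¬ IsClosed (B : Set G))
    (hZ : ∀ g ∈ closure (B : Set G), g ∈ Subgroup.center G → g = 1) :
    ¬ IsMinimalTopGroup
        (G ⋊[actHom (Subgroup.map (innerAutHom G) B)] ↥(Subgroup.map (innerAutHom G) B))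
        (sdpTop (Subgroup.map (innerAutHom G) B)) := by
  classical
  letI : TopologicalSpace ↥(Subgroup.map (innerAutHom G) B) :=
    subAutTop (Subgroup.map (innerAutHom G) B)
  letI : TopologicalSpace
      (G ⋊[actHom (Subgroup.map (innerAutHom G) B)] ↥(Subgroup.map (innerAutHom G) B)) :=
    sdpTop (Subgroup.map (innerAutHom G) B)
  intro hmin
  -- a point in the closure of `B` that is not in `B`
  obtain ⟨x, hxcl, hxB⟩ : ∃ x, x ∈ closure (B : Set G) ∧ x ∉ B := by
    by_contra hcon
    push_neg at hcon
    refine hBnotClosed ?_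
    have : closure (B : Set G) = (B : Set G) :=
      Set.Subset.antisymm (fun y hy => hcon y hy) subset_closure
    rw [← this]; exact isClosed_closure
  haveI : CompactSpace ↥B.topologicalClosure :=
    isCompact_iff_compactSpace.mp B.isClosed_topologicalClosure.isCompact
  have hKb : ∀ g ∈ closure (B : Set G), g * g = 1 := bool_closure B hBool
  set x' : ↥B.topologicalClosure := ⟨x, (mem_topClosure_iff B).mpr hxcl⟩ with hx'def
  have hx2 : x' * x' = 1 := Subtype.ext (hKb x hxcl)
  set N : Subgroup ↥B.topologicalClosure := pairSubgroup x' hx2 with hNdef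
  -- commutativity of the closure of `B`
  have hKcomm : ∀ a b : ↥B.topologicalClosure, a * b = b * a := by
    intro a b
    have ha := hKb (a : G) ((mem_topClosure_iff B).mp a.2)
    have hb := hKb (b : G) ((mem_topClosure_iff B).mp b.2)
    have hab := hKb ((a : G) * (b : G))
      ((mem_topClosure_iff B).mp (mul_mem a.2 b.2))
    apply Subtype.ext
    show (a : G) * b = (b : G) * a
    calc (a : G) * b = ((a : G) * b)⁻¹ := (inv_eq_of_mul_eq_one_right hab).symm
    _ = (b : G)⁻¹ * (a : G)⁻¹ := mul_inv_rev _ _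
    _ = (b : G) * a := by
        rw [inv_eq_of_mul_eq_one_right ha, inv_eq_of_mul_eq_one_right hb]
  haveI hNnormal : N.Normal := by
    constructor
    intro n hn g
    have : g * n * g⁻¹ = n := by rw [hKcomm g n, mul_inv_cancel_right]
    rwa [this]
  haveI hNclosed : IsClosed (N : Set ↥B.topologicalClosure) := by
    have : (N : Set ↥B.topologicalClosure) = {1, x'} := rfl
    rw [this]
    exact (Set.finite_singleton x').insert 1 |>.isClosed
  haveI : T2Space (↥B.topologicalClosure ⧸ N) := inferInstance
  -- the comparison homomorphism Φ
  set Phi : (G ⋊[actHom (Subgroup.map (innerAutHom G) B)]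
        ↥(Subgroup.map (innerAutHom G) B)) → G × (↥B.topologicalClosure ⧸ N) :=
    fun z => (z.left * betaFun B z.right,
      (QuotientGroup.mk
        ⟨betaFun B z.right, B.le_topologicalClosure (betaFun_mem B z.right)⟩ :
        ↥B.topologicalClosure ⧸ N)) with hPhidef
  have hPhione : Phi 1 = 1 := by
    rw [hPhidef]
    have h1 : betaFun B (1 : ↥(Subgroup.map (innerAutHom G) B)) = 1 := betaFun_one B hZ
    refine Prod.ext ?_ ?_
    · show (1 : G) * betaFun B 1 = 1
      rw [h1, mul_one]
    · show (QuotientGroup.mk ⟨betaFun B (1 : ↥(Subgroup.map (innerAutHom G) B)), _⟩ :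
        ↥B.topologicalClosure ⧸ N) = 1
      have : (⟨betaFun B (1 : ↥(Subgroup.map (innerAutHom G) B)),
          B.le_topologicalClosure (betaFun_mem B 1)⟩ : ↥B.topologicalClosure) = 1 :=
        Subtype.ext h1
      rw [this]
      rfl
  have hPhimul : ∀ z w, Phi (z * w) = Phi z * Phi w := by
    intro z w
    have hzw : betaFun B (z.right * w.right)
        = betaFun B z.right * betaFun B w.right := betaFun_mul B hZ _ _
    refine Prod.ext ?_ ?_
    · show (z * w).left * betaFun B (z * w).right
        = (z.left * betaFun B z.right) * (w.left * betaFun B w.right)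
      have hleft : (z * w).left
          = z.left * (actHom (Subgroup.map (innerAutHom G) B) z.right w.left) := rfl
      have hright : (z * w).right = z.right * w.right := rfl
      rw [hleft, hright, hzw, actHom_apply_eq B z.right w.left]
      group
    · show (QuotientGroup.mk ⟨betaFun B (z * w).right, _⟩ :
          ↥B.topologicalClosure ⧸ N)
        = QuotientGroup.mk ⟨betaFun B z.right, _⟩ * QuotientGroup.mk ⟨betaFun B w.right, _⟩
      have hright : (z * w).right = z.right * w.right := rfl
      have : (⟨betaFun B (z * w).right,
            B.le_topologicalClosure (betaFun_mem B (z * w).right)⟩ :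
          ↥B.topologicalClosure)
          = ⟨betaFun B z.right, B.le_topologicalClosure (betaFun_mem B z.right)⟩
            * ⟨betaFun B w.right, B.le_topologicalClosure (betaFun_mem B w.right)⟩ := by
        apply Subtype.ext
        show betaFun B (z * w).right = betaFun B z.right * betaFun B w.right
        rw [hright, hzw]
      rw [this]
      rfl
  set PhiHom : (G ⋊[actHom (Subgroup.map (innerAutHom G) B)]
        ↥(Subgroup.map (innerAutHom G) B)) →* G × (↥B.topologicalClosure ⧸ N) :=
    { toFun := Phi, map_one' := hPhione, map_mul' := hPhimul } with hPhiHomdef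
  -- Φ is injective
  have hPhiinj : Function.Injective Phi := by
    have := (injective_iff_map_eq_one PhiHom).mpr ?_
    · exact this
    intro z hz
    have h1 : z.left * betaFun B z.right = 1 := congrArg Prod.fst hz
    have h2 : (QuotientGroup.mk
        ⟨betaFun B z.right, B.le_topologicalClosure (betaFun_mem B z.right)⟩ :
        ↥B.topologicalClosure ⧸ N) = 1 := congrArg Prod.snd hz
    have hmemN : (⟨betaFun B z.right, B.le_topologicalClosure (betaFun_mem B z.right)⟩ :
        ↥B.topologicalClosure) ∈ N := (QuotientGroup.eq_one_iff _).mp h2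
    have hb1 : betaFun B z.right = 1 := by
      rcases mem_pairSubgroup.mp hmemN with h | h
      · exact congrArg Subtype.val h
      · exfalso
        have : betaFun B z.right = x := congrArg Subtype.val h
        exact hxB (this ▸ betaFun_mem B z.right)
    have hr1 : z.right = 1 := by
      apply Subtype.ext
      have := betaFun_spec B z.right
      rw [hb1, map_one] at this
      exact this.symm
    have hl1 : z.left = 1 := by rwa [hb1, mul_one] at h1
    cases z with
    | mk l r => cases hr1; cases hl1; rfl
  -- Φ is continuous for the original topology
  have he : Continuous (fun z : (G ⋊[actHom (Subgroup.map (innerAutHom G) B)]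
      ↥(Subgroup.map (innerAutHom G) B)) => (z.left, z.right)) :=
    continuous_induced_dom
  have hleftc : Continuous (SemidirectProduct.left :
      (G ⋊[actHom (Subgroup.map (innerAutHom G) B)]
        ↥(Subgroup.map (innerAutHom G) B)) → G) := continuous_fst.comp he
  have hrightc : Continuous (SemidirectProduct.right :
      (G ⋊[actHom (Subgroup.map (innerAutHom G) B)]
        ↥(Subgroup.map (innerAutHom G) B)) → ↥(Subgroup.map (innerAutHom G) B)) :=
    continuous_snd.comp he
  have hbeta : Continuous (betaFun B) := betaFun_continuous B hZ
  have hPhicont : Continuous Phi := by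
    rw [hPhidef]
    refine Continuous.prodMk (hleftc.mul (hbeta.comp hrightc)) ?_
    exact QuotientGroup.continuous_mk.comp
      (((hbeta.comp hrightc).subtype_mk _))
  -- the filter witnessing the difference of the two topologies
  set F : Filter ↥B := Filter.comap (Subtype.val : ↥B → G) (𝓝 x) with hFdef
  haveI hFne : F.NeBot := by
    rw [hFdef]
    exact mem_closure_iff_comap_neBot.mp hxcl
  set f : ↥B → (G ⋊[actHom (Subgroup.map (innerAutHom G) B)]
      ↥(Subgroup.map (innerAutHom G) B)) :=
    fun b => ⟨(b : G)⁻¹, ⟨innerAutHom G (b : G), Subgroup.mem_map_of_mem _ b.2⟩⟩ with hfdef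
  -- ... but not in the original topology
  have hB2 : ¬ Filter.Tendsto f F
      (@nhds _ (sdpTop (Subgroup.map (innerAutHom G) B)) 1) := by
    intro h
    have h1 : Filter.Tendsto (fun b : ↥B => (b : G)⁻¹) F (𝓝 (1 : G)) := by
      have := (hleftc.tendsto 1).comp h
      exact this
    have h2 : Filter.Tendsto (fun b : ↥B => (b : G)) F (𝓝 (1 : G)) := by
      have := h1.inv
      simpa using this
    have h3 : Filter.Tendsto (fun b : ↥B => (b : G)) F (𝓝 x) := Filter.tendsto_comap
    have : x = 1 := tendsto_nhds_unique h3 h2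
    exact hxB (this ▸ B.one_mem)
  -- the coarser topology σ
  set σ : TopologicalSpace (G ⋊[actHom (Subgroup.map (innerAutHom G) B)]
      ↥(Subgroup.map (innerAutHom G) B)) :=
    TopologicalSpace.induced Phi inferInstance with hσdef
  have hle : sdpTop (Subgroup.map (innerAutHom G) B) ≤ σ :=
    continuous_iff_le_induced.mp hPhicont
  have hTG : @IsTopologicalGroup _ σ _ := topologicalGroup_induced PhiHom
  have hT2 : @T2Space _ σ :=
    @Topology.IsEmbedding.t2Space _ _ σ _ _ Phi ⟨⟨rfl⟩, hPhiinj⟩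
  have heq : σ = sdpTop (Subgroup.map (innerAutHom G) B) := hmin σ hle hTG hT2
  -- `f` tends to `1` in the σ-topology ...
  have hA : Filter.Tendsto f F (@nhds _ σ 1) := by
    have hn : @nhds _ σ 1 = Filter.comap Phi (𝓝 (Phi 1)) := nhds_induced Phi 1
    rw [hn, Filter.tendsto_comap_iff, hPhione]
    have hfe : (Phi ∘ f) = fun b : ↥B =>
        ((1 : G), (QuotientGroup.mk ⟨(b : G), B.le_topologicalClosure b.2⟩ :
          ↥B.topologicalClosure ⧸ N)) := by
      funext b
      have hb : betaFun B (⟨innerAutHom G (b : G), Subgroup.mem_map_of_mem _ b.2⟩ :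
          ↥(Subgroup.map (innerAutHom G) B)) = (b : G) :=
        betaFun_eq B hZ b.2 _ rfl
      refine Prod.ext ?_ ?_
      · show (b : G)⁻¹ * betaFun B _ = 1
        rw [hb, inv_mul_cancel]
      · show (QuotientGroup.mk ⟨betaFun B _, _⟩ : ↥B.topologicalClosure ⧸ N) = _
        congr 1
        exact Subtype.ext hb
    rw [hfe]
    have hincl : Filter.Tendsto
        (fun b : ↥B => (⟨(b : G), B.le_topologicalClosure b.2⟩ : ↥B.topologicalClosure))
        F (𝓝 x') := by
      have hn2 : (𝓝 x') = Filter.comap (Subtype.val : ↥B.topologicalClosure → G) (𝓝 x) :=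
        nhds_induced _ _
      rw [hn2, Filter.tendsto_comap_iff]
      exact Filter.tendsto_comap
    have hmkx : (QuotientGroup.mk x' : ↥B.topologicalClosure ⧸ N) = 1 :=
      (QuotientGroup.eq_one_iff x').mpr (mem_pairSubgroup.mpr (Or.inr rfl))
    have h2 : Filter.Tendsto
        (fun b : ↥B => (QuotientGroup.mk ⟨(b : G), B.le_topologicalClosure b.2⟩ :
          ↥B.topologicalClosure ⧸ N)) F (𝓝 1) := by
      have := ((QuotientGroup.continuous_mk (N := N)).tendsto x').comp hincl
      rwa [hmkx] at this
    exact Filter.Tendsto.prodMk_nhds tendsto_const_nhds h2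
  rw [heq] at hA
  exact hB2 hA
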